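/- Let A and B be max-plus automata over the same finite alphabet Σ with A deterministic and f_B(v) ∈ ℕ for all words v. For every element (p,x,q,M) of the semigroup of asymptotic behaviours I_{A,B} and every s ∈ ℕ, there exist a word w_s ∈ Σ* and x_s ∈ ℕ such that: (1) A has a run from p to q labelled by w_s of weight x_s, and bar(x) = bar(x_s); (2) bar(M_B(w_s)) = bar(M); (3) if x = ∞, then for all indices i, j with M_{i,j} ≤ 1, one has x_s ≥ s·(M_B(w_s))_{i,j} + s. -/

import Mathlib

open scoped Classical

/-! ### Max-plus automata -/

/-- A max-plus automaton over alphabet `Sigma` with states `Q`: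
a transition matrix for each letter, an initial row vector and a final column vector,
all with entries in `ℕmax = ℕ ∪ {-∞}`, represented as `WithBot ℕ`. -/
structure MPA (Sigma : Type) (Q : Type) where
  M : Sigma → Q → Q → WithBot ℕ
  I : Q → WithBot ℕ
  F : Q → WithBot ℕ

namespace MPA

variable {Sigma Q : Type}

/-- The matrix of a word, i.e. the product `M(w₁) ⊗ ⋯ ⊗ M(w_k)` over the
max-plus semiring. -/
def mword [Fintype Q] [DecidableEq Q] (A : MPA Sigma Q) : List Sigma → Q → Q → WithBot ℕ
  | [] => fun p q => if p = q then ((0 : ℕ) : WithBot ℕ) else ⊥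
  | a :: w => fun p q => Finset.univ.sup fun r => A.M a p r + A.mword w r q

/-- The weighting function computed by a max-plus automaton:
`f_A(w) = I ⊗ M(w) ⊗ F`. -/
def func [Fintype Q] [DecidableEq Q] (A : MPA Sigma Q) (w : List Sigma) : WithBot ℕ :=
  Finset.univ.sup fun p => Finset.univ.sup fun q => A.I p + A.mword w p q + A.F q

/-- `A` is deterministic: at most one non-`-∞` entry in `I`,
and at most one non-`-∞` entry in each row of each `M(a)`. -/
def Deterministic (A : MPA Sigma Q) : Prop :=
  (∀ p q, A.I p ≠ ⊥ → A.I q ≠ ⊥ → p = q) ∧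
    ∀ a p q r, A.M a p q ≠ ⊥ → A.M a p r ≠ ⊥ → q = r

end MPA

/-- `A` is big-O of `B`: there is `c ≥ 1` with `f_A(w) ≤ c·f_B(w) + c` for all `w`. -/
def BigO {Sigma Q1 Q2 : Type} [Fintype Q1] [DecidableEq Q1] [Fintype Q2] [DecidableEq Q2]
    (A : MPA Sigma Q1) (B : MPA Sigma Q2) : Prop :=
  ∃ c : ℕ, 1 ≤ c ∧ ∀ w : List Sigma, A.func w ≤ c • B.func w + (c : WithBot ℕ)

/-! ### The semiring Ω = {-∞, 0, 1, ∞} -/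

/-- The four-element semiring `Ω = ({-∞,0,1,∞}, max, +)`. -/
inductive OSR : Type
  | bot | zero | one | inf
  deriving DecidableEq

namespace OSR

def rank : OSR → ℕ
  | bot => 0 | zero => 1 | one => 2 | inf => 3

instance : LE OSR := ⟨fun a b => a.rank ≤ b.rank⟩
instance : LT OSR := ⟨fun a b => a.rank < b.rank⟩

/-- The max operation of `Ω`, given by the order `-∞ < 0 < 1 < ∞`. -/
def sup (a b : OSR) : OSR := if a.rank ≤ b.rank then b else a

/-- The sum operation of `Ω`. -/
def add : OSR → OSR → OSR
  | bot, _ => bot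
  | _, bot => bot
  | zero, x => x
  | x, zero => x
  | one, one => one
  | one, inf => inf
  | inf, one => inf
  | inf, inf => inf

/-- Stabilisation on `Ω`. -/
def sharp : OSR → OSR
  | bot => bot | zero => zero | one => inf | inf => inf

/-- Projection into `Ω̄ = {-∞,0,1}`. -/
def bar : OSR → OSR
  | bot => bot | zero => zero | one => one | inf => one

end OSR

/-- Max of a finite family in `Ω`. -/
def osum {n : ℕ} (f : Fin n → OSR) : OSR :=
  (List.finRange n).foldr (fun j acc => OSR.sup (f j) acc) OSR.bot

/-- Product of matrices over `Ω`. -/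
def omul {n : ℕ} (M N : Fin n → Fin n → OSR) : Fin n → Fin n → OSR :=
  fun i k => osum fun j => OSR.add (M i j) (N j k)

/-- Entrywise projection of a matrix into `Ω̄`. -/
def obar {n : ℕ} (M : Fin n → Fin n → OSR) : Fin n → Fin n → OSR :=
  fun i j => (M i j).bar

/-- Projection of `ℕmax` into `Ω̄ ⊆ Ω`: `-∞ ↦ -∞`, `0 ↦ 0`, positive ↦ `1`. -/
def barW (x : WithBot ℕ) : OSR :=
  WithBot.recBotCoe OSR.bot (fun n => if n = 0 then OSR.zero else OSR.one) x

/-- Projection of `ℕ` into `Ω̄`. -/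
def barNat (n : ℕ) : OSR := if n = 0 then OSR.zero else OSR.one

/-! ### The semigroups `I_{Q,i}` and their operations -/

/-- A (non-`⊥`) element `(p, x, q, M)` of the semigroup `I_{Q,n}`. -/
structure Elem (QA : Type) (n : ℕ) where
  p : QA
  x : OSR
  q : QA
  M : Fin n → Fin n → OSR

/-- Product of two elements (assuming endpoint compatibility). -/
def eprod {QA : Type} {n : ℕ} (e f : Elem QA n) : Elem QA n :=
  ⟨e.p, e.x.add f.x, f.q, omul e.M f.M⟩

/-- The product in `I_{Q,n}` with `⊥` (`none` is `⊥`). -/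
def omulO {QA : Type} {n : ℕ} [DecidableEq QA] :
    Option (Elem QA n) → Option (Elem QA n) → Option (Elem QA n)
  | some e, some f => if e.q = f.p then some (eprod e f) else none
  | _, _ => none

/-- `(p,x,q,M)` is path-idempotent: `p = q` and `bar(M)` is idempotent. -/
def pathIdem {QA : Type} {n : ℕ} (e : Elem QA n) : Prop :=
  e.p = e.q ∧ omul (obar e.M) (obar e.M) = obar e.M

/-- `M` with all diagonal entries replaced by their stabilisation. -/
def mdiagSharp {n : ℕ} (M : Fin n → Fin n → OSR) : Fin n → Fin n → OSR :=
  fun i j => if i = j then (M i j).sharp else M i j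

/-- Stabilisation of a (path-idempotent) matrix: `M^# = M ⊗ M' ⊗ M`. -/
def mstab {n : ℕ} (M : Fin n → Fin n → OSR) : Fin n → Fin n → OSR :=
  omul (omul M (mdiagSharp M)) M

/-- Stabilisation of a (path-idempotent) element. -/
def estab {QA : Type} {n : ℕ} (e : Elem QA n) : Elem QA n :=
  ⟨e.p, e.x.sharp, e.p, mstab e.M⟩

/-- `⟨N⟩`: all off-diagonal entries replaced by their bar. -/
def mangle {n : ℕ} (M : Fin n → Fin n → OSR) : Fin n → Fin n → OSR :=
  fun i j => if i = j then M i j else (M i j).bar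

/-- Flattening of a (path-idempotent) matrix: `M^♭ = bar(M) ⊗ ⟨M³⟩ ⊗ bar(M)`. -/
def mflat {n : ℕ} (M : Fin n → Fin n → OSR) : Fin n → Fin n → OSR :=
  omul (obar M) (omul (mangle (omul M (omul M M))) (obar M))

/-- Flattening of a (path-idempotent) element. -/
def eflat {QA : Type} {n : ℕ} (e : Elem QA n) : Elem QA n :=
  ⟨e.p, e.x, e.p, mflat e.M⟩

/-- Componentwise projection of an element to `Ω̄`. -/
def ebar {QA : Type} {n : ℕ} (e : Elem QA n) : Elem QA n :=
  ⟨e.p, e.x.bar, e.q, obar e.M⟩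

/-! ### Semigroup of paths and of asymptotic behaviours -/

/-- Generators: `(p, bar x, q, bar (M_B(a)))` for each transition `p →^{a:x} q` of `A`
with `x ≠ -∞`. -/
def IsGen {Sigma QA : Type} {nB : ℕ} (A : MPA Sigma QA) (B : MPA Sigma (Fin nB))
    (e : Elem QA nB) : Prop :=
  ∃ (a : Sigma) (p q : QA) (x : ℕ), A.M a p q = ((x : ℕ) : WithBot ℕ) ∧
    e = ⟨p, barNat x, q, fun i j => barW (B.M a i j)⟩

/-- The semigroup of paths `S̄_{A,B}` (as a subset of `Ī_{Q_A,|Q_B|}`, including `⊥`):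
generated by the generators under the product. -/
inductive InPathsO {Sigma QA : Type} {nB : ℕ} [DecidableEq QA]
    (A : MPA Sigma QA) (B : MPA Sigma (Fin nB)) : Option (Elem QA nB) → Prop
  | gen : ∀ e, IsGen A B e → InPathsO A B (some e)
  | mul : ∀ x y, InPathsO A B x → InPathsO A B y → InPathsO A B (omulO x y)

/-- The semigroup of asymptotic behaviours `I_{A,B}`: generated by the generators and
closed under product, stabilisation and flattening. -/
inductive InAsympO {Sigma QA : Type} {nB : ℕ} [DecidableEq QA]
    (A : MPA Sigma QA) (B : MPA Sigma (Fin nB)) : Option (Elem QA nB) → Prop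
  | gen : ∀ e, IsGen A B e → InAsympO A B (some e)
  | mul : ∀ x y, InAsympO A B x → InAsympO A B y → InAsympO A B (omulO x y)
  | stab : ∀ e, InAsympO A B (some e) → pathIdem e → InAsympO A B (some (estab e))
  | flat : ∀ e, InAsympO A B (some e) → pathIdem e → InAsympO A B (some (eflat e))

/-- The cardinality `|S̄_{A,B}|` of the semigroup of paths. -/
noncomputable def sizeS {Sigma QA : Type} {nB : ℕ} [DecidableEq QA]
    (A : MPA Sigma QA) (B : MPA Sigma (Fin nB)) : ℕ :=
  Set.ncard {x : Option (Elem QA nB) | InPathsO A B x}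

/-- `(p,x,q,M)` is a witness of non-domination: `p` initial in `A`, `q` final in `A`,
`x = ∞` and `bar(I_B) ⊗ M ⊗ bar(F_B) < ∞`. -/
def IsWitness {Sigma QA : Type} {nB : ℕ} (A : MPA Sigma QA) (B : MPA Sigma (Fin nB))
    (e : Elem QA nB) : Prop :=
  A.I e.p ≠ ⊥ ∧ A.F e.q ≠ ⊥ ∧ e.x = OSR.inf ∧
    osum (fun i => osum fun j =>
      OSR.add (barW (B.I i)) (OSR.add (e.M i j) (barW (B.F j)))) ≠ OSR.inf

/-! ### Tractable witnesses -/

/-- Membership of an extended element (`none` is the adjoined identity `𝟙`) in `S̄_{A,B}`. -/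
def InPathsOpt {Sigma QA : Type} {nB : ℕ} [DecidableEq QA]
    (A : MPA Sigma QA) (B : MPA Sigma (Fin nB)) : Option (Elem QA nB) → Prop
  | none => True
  | some e => InPathsO A B (some e)

/-- `g ⊗ e ⊗ g'` where `g, g'` may be the adjoined identity `𝟙` (i.e. `none`). -/
def extWrap {QA : Type} {n : ℕ} (g : Option (Elem QA n)) (e : Elem QA n)
    (g' : Option (Elem QA n)) : Elem QA n :=
  match g, g' with
  | none, none => e
  | some a, none => eprod a e
  | none, some b => eprod e b
  | some a, some b => eprod a (eprod e b)

/-- `TractCore A B k e`: `e` has the form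
`(g_1 (⋯ (g_{k-1} (g_k)^# g'_{k-1})^♭ ⋯)^♭ g'_1)^♭` with `k` flattenings, built from
elements of `S̄_{A,B} ∪ {𝟙}`. -/
inductive TractCore {Sigma QA : Type} {nB : ℕ} [DecidableEq QA]
    (A : MPA Sigma QA) (B : MPA Sigma (Fin nB)) : ℕ → Elem QA nB → Prop
  | base : ∀ e, InPathsO A B (some e) → pathIdem e → TractCore A B 0 (estab e)
  | step : ∀ k e g g', TractCore A B k e →
      InPathsOpt A B g → InPathsOpt A B g' →
      (∀ a, g = some a → a.q = e.p) → (∀ b, g' = some b → e.q = b.p) →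
      pathIdem (extWrap g e g') →
      TractCore A B (k + 1) (eflat (extWrap g e g'))

/-- A tractable witness of non-domination. -/
def IsTractableWitness {Sigma QA : Type} {nB : ℕ} [DecidableEq QA]
    (A : MPA Sigma QA) (B : MPA Sigma (Fin nB)) (wit : Elem QA nB) : Prop :=
  IsWitness A B wit ∧
    ∃ (m : ℕ) (e : Elem QA nB) (g g' : Option (Elem QA nB)),
      m + 1 ≤ 3 * sizeS A B ∧
      TractCore A B m e ∧ InPathsOpt A B g ∧ InPathsOpt A B g' ∧
      (∀ a, g = some a → a.q = e.p) ∧ (∀ b, g' = some b → e.q = b.p) ∧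
      wit = extWrap g e g'

/-! ### Factorisation trees -/

/-- Finite ordered trees labelled by elements of `Ī_{Q_A,|Q_B|}`. -/
inductive FT (QA : Type) (n : ℕ) : Type
  | leaf : Elem QA n → FT QA n
  | node : Elem QA n → List (FT QA n) → FT QA n

namespace FT

variable {QA : Type} {n : ℕ}

/-- The label of the root of a tree. -/
def label : FT QA n → Elem QA n
  | leaf e => e
  | node e _ => e

mutual
  /-- The list of leaf labels of a tree, in order. -/
  def leaves : FT QA n → List (Elem QA n)
    | .leaf e => [e]
    | .node _ cs => leavesList cs
  def leavesList : List (FT QA n) → List (Elem QA n)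
    | [] => []
    | t :: ts => leaves t ++ leavesList ts
end

mutual
  /-- Height of a tree: leaves have height `0`. -/
  def height : FT QA n → ℕ
    | .leaf _ => 0
    | .node _ cs => heightList cs + 1
  def heightList : List (FT QA n) → ℕ
    | [] => 0
    | t :: ts => max (height t) (heightList ts)
end

/-- The `i`-th child. -/
def childAt : FT QA n → ℕ → Option (FT QA n)
  | leaf _, _ => none
  | node _ cs, i => cs[i]?

/-- The subtree at a path (a list of child indices from the root). -/
def subtreeAt : FT QA n → List ℕ → Option (FT QA n)
  | t, [] => some t
  | t, i :: rest => (t.childAt i).bind fun c => subtreeAt c rest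

/-- Well-formed factorisation trees: internal nodes have ≥ 2 children, are labelled by the
product of the children's labels (with compatible endpoints), and nodes with ≥ 3 children
are idempotent nodes: all children and the node itself carry one same idempotent label. -/
inductive WF : FT QA n → Prop
  | leaf : ∀ e, WF (FT.leaf e)
  | node : ∀ (lbl : Elem QA n) (cs : List (FT QA n)),
      2 ≤ cs.length →
      (∀ c ∈ cs, WF c) →
      List.Chain' (fun a b => a.q = b.p) (cs.map FT.label) →
      (∀ h t, cs.map FT.label = h :: t → lbl = t.foldl eprod h) →
      (3 ≤ cs.length → lbl.p = lbl.q ∧ eprod lbl lbl = lbl ∧ ∀ c ∈ cs, FT.label c = lbl) →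
      WF (FT.node lbl cs)

end FT

/-- One top-down step of the computation of contributors: from the contributor set `C` of a
node with children `cs`, the contributor set of the `i`-th child. -/
def contribStep {QA : Type} {n : ℕ} (cs : List (FT QA n)) (C : Set (Fin n × Fin n)) (i : ℕ) :
    Set (Fin n × Fin n) :=
  match cs with
  | [c1, c2] =>
      let M := (FT.label c1).M
      let P := (FT.label c2).M
      if i = 0 then
        {il | ∃ j, (il.1, j) ∈ C ∧ P il.2 j ≠ OSR.bot ∧ M il.1 il.2 ≠ OSR.bot}
      else
        {lj | ∃ a, (a, lj.2) ∈ C ∧ M a lj.1 ≠ OSR.bot ∧ P lj.1 lj.2 ≠ OSR.bot}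
  | c :: _ :: _ :: _ =>
      let M := (FT.label c).M
      if i = 0 then
        {il | ∃ j, (il.1, j) ∈ C ∧ M il.2 j ≠ OSR.bot ∧ M il.1 il.2 ≠ OSR.bot}
      else if i = cs.length - 1 then
        {lj | ∃ a, (a, lj.2) ∈ C ∧ M a lj.1 ≠ OSR.bot ∧ M lj.1 lj.2 ≠ OSR.bot}
      else
        {lk | ∃ a b, (a, b) ∈ C ∧ M a lk.1 ≠ OSR.bot ∧ M lk.2 b ≠ OSR.bot ∧
              M lk.1 lk.2 ≠ OSR.bot ∧ M lk.2 lk.1 ≠ OSR.bot}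
  | _ => ∅

/-- Contributor set of the node at path `π`, starting from the set `C` at the root. -/
def contribAt {QA : Type} {n : ℕ} : FT QA n → Set (Fin n × Fin n) → List ℕ → Set (Fin n × Fin n)
  | _, C, [] => C
  | FT.leaf _, _, _ :: _ => ∅
  | FT.node _ cs, C, i :: rest =>
      match cs[i]? with
      | none => ∅
      | some c => contribAt c (contribStep cs C i) rest

/-- The contributor set of the root: pairs `(i,j)` with `i` initial in `B`, `j` final in `B`
and `M_{i,j} ≠ -∞`. -/
def rootContrib {Sigma QA : Type} {n : ℕ} (B : MPA Sigma (Fin n)) (t : FT QA n) :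
    Set (Fin n × Fin n) :=
  {ij | B.I ij.1 ≠ ⊥ ∧ B.F ij.2 ≠ ⊥ ∧ (FT.label t).M ij.1 ij.2 ≠ OSR.bot}

/-- The contributor set of the node at path `π` of the tree `t`. -/
def contributors {Sigma QA : Type} {n : ℕ} (B : MPA Sigma (Fin n)) (t : FT QA n)
    (π : List ℕ) : Set (Fin n × Fin n) :=
  contribAt t (rootContrib B t) π

/-- `PathLeaves A B p w xs ls q`: `ls` is the list `α_w(w₁), …, α_w(w_k)` associated with the
run of `A` on `w` from `p` to `q` with transition weights `xs`. -/
def PathLeaves {Sigma QA : Type} {nB : ℕ} (A : MPA Sigma QA) (B : MPA Sigma (Fin nB)) :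
    QA → List Sigma → List ℕ → List (Elem QA nB) → QA → Prop
  | p, [], [], [], q => p = q
  | p, a :: w, x :: xs, e :: ls, q =>
      e.p = p ∧ A.M a p e.q = ((x : ℕ) : WithBot ℕ) ∧ e.x = barNat x ∧
      (e.M = fun i j => barW (B.M a i j)) ∧ PathLeaves A B e.q w xs ls q
  | _, _, _, _, _ => False

/-- `t` is a factorisation tree on the word `w` (for the accepting run of `A` on `w`). -/
def IsFactTreeOn {Sigma QA : Type} {nB : ℕ} [Fintype QA] [DecidableEq QA]
    (A : MPA Sigma QA) (B : MPA Sigma (Fin nB)) (w : List Sigma) (t : FT QA nB) : Prop :=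
  FT.WF t ∧ ∃ (p q : QA) (xs : List ℕ),
    A.I p ≠ ⊥ ∧ A.F q ≠ ⊥ ∧ PathLeaves A B p w xs (FT.leaves t) q

/-- The node of `t` at path `π` is a fault. -/
def IsFaultAt {Sigma QA : Type} {nB : ℕ} (B : MPA Sigma (Fin nB)) (t : FT QA nB)
    (π : List ℕ) : Prop :=
  ∃ σ i, π = σ ++ [i] ∧
    ∃ lbl cs, FT.subtreeAt t σ = some (FT.node lbl cs) ∧ 3 ≤ cs.length ∧
      0 < i ∧ i < cs.length - 1 ∧
      ∃ c, cs[i]? = some c ∧ (FT.label c).x = OSR.one ∧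
        ∀ ij ∈ contributors B t π, (FT.label c).M ij.1 ij.2 = OSR.zero

/-- Number of leaves strictly to the left of the node at path `π`. -/
def offsetAt {QA : Type} {n : ℕ} : FT QA n → List ℕ → ℕ
  | _, [] => 0
  | FT.leaf _, _ :: _ => 0
  | FT.node _ cs, i :: rest =>
      ((cs.take i).map fun c => (FT.leaves c).length).sum +
        match cs[i]? with
        | none => 0
        | some c => offsetAt c rest

/-- Height of the node at path `π`. -/
def heightAt {QA : Type} {n : ℕ} (t : FT QA n) (π : List ℕ) : ℕ :=
  match FT.subtreeAt t π with
  | some c => FT.height c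
  | none => 0

/-- The β-labelling: `beta t π` is the β-label of the root of `t`, where `π` is the path
from the root of `t` down to the fault `ν₁`. -/
def beta {QA : Type} {n : ℕ} : FT QA n → List ℕ → Elem QA n
  | t, [] => FT.label t
  | FT.leaf e, _ :: _ => e
  | FT.node lbl cs, i :: rest =>
      match cs[i]? with
      | none => lbl
      | some c =>
        match rest with
        | [] => estab (FT.label c)
        | j :: rest' =>
          let inner := beta c (j :: rest')
          if cs.length = 2 then
            (if i = 0 then eprod inner ((cs[1]?.map FT.label).getD lbl)
             else eprod ((cs[0]?.map FT.label).getD lbl) inner)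
          else
            if i = 0 then eprod inner (FT.label c)
            else if i = cs.length - 1 then eprod (FT.label c) inner
            else eflat inner


namespace OSR

instance : Fintype OSR :=
  ⟨⟨{.bot, .zero, .one, .inf}, by decide⟩, by intro x; cases x <;> decide⟩

instance : DecidableRel (α := OSR) (· ≤ ·) :=
  fun a b => inferInstanceAs (Decidable (rank a ≤ rank b))

lemma le_refl' (a : OSR) : a ≤ a := by revert a; decide
lemma le_antisymm' {a b : OSR} (h : a ≤ b) (h' : b ≤ a) : a = b := by revert h h'; revert a b; decide
lemma le_trans' {a b c : OSR} (h : a ≤ b) (h' : b ≤ c) : a ≤ c := by revert h h'; revert a b c; decide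
lemma bot_le' (a : OSR) : OSR.bot ≤ a := by revert a; decide
lemma le_inf' (a : OSR) : a ≤ OSR.inf := by revert a; decide
lemma le_sup_left (a b : OSR) : a ≤ sup a b := by revert a b; decide
lemma le_sup_right (a b : OSR) : b ≤ sup a b := by revert a b; decide
lemma sup_le' {a b c : OSR} (h : a ≤ c) (h' : b ≤ c) : sup a b ≤ c := by revert h h'; revert a b c; decide
lemma bar_sup (a b : OSR) : (sup a b).bar = sup a.bar b.bar := by revert a b; decide
lemma bar_add (a b : OSR) : (add a b).bar = add a.bar b.bar := by revert a b; decide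
lemma bar_bar (a : OSR) : a.bar.bar = a.bar := by revert a; decide
lemma bar_sharp (a : OSR) : a.sharp.bar = a.bar := by revert a; decide
lemma add_ne_bot {a b : OSR} (h : a ≠ OSR.bot) (h' : b ≠ OSR.bot) : add a b ≠ OSR.bot := by
  revert h h'; revert a b; decide
lemma ne_bot_of_le {a b : OSR} (h : a ≠ OSR.bot) (h' : a ≤ b) : b ≠ OSR.bot := by
  revert h h'; revert a b; decide
lemma eq_inf_of_le {a : OSR} (h : OSR.inf ≤ a) : a = OSR.inf := by revert h; revert a; decide
lemma bar_ne_bot {a : OSR} : a.bar ≠ OSR.bot ↔ a ≠ OSR.bot := by revert a; decide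
lemma add_le_one {a b : OSR} (h : add a b ≤ OSR.one) (ha : a ≠ OSR.bot) (hb : b ≠ OSR.bot) :
    a ≤ OSR.one ∧ b ≤ OSR.one := by revert h ha hb; revert a b; decide
lemma add_eq_inf {a b : OSR} (h : add a b = OSR.inf) : a = OSR.inf ∨ b = OSR.inf := by
  revert h; revert a b; decide
lemma add_inf_left {a : OSR} (h : a ≠ OSR.bot) (b : OSR) (hb : b = OSR.inf) : add b a = OSR.inf := by
  subst hb; revert h; revert a; decide
lemma add_inf_right {a : OSR} (h : a ≠ OSR.bot) (b : OSR) (hb : b = OSR.inf) : add a b = OSR.inf := by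
  subst hb; revert h; revert a; decide
lemma add_mono_left {a a' : OSR} (b : OSR) (h : a ≤ a') : add a b ≤ add a' b := by
  revert h; revert a a' b; decide
lemma bar_eq_zero {a : OSR} (h : a.bar = OSR.zero) : a = OSR.zero := by revert h; revert a; decide
lemma bar_one_cases {a : OSR} (h : a.bar = OSR.one) : a = OSR.one ∨ a = OSR.inf := by
  revert h; revert a; decide
lemma le_one_iff {a : OSR} : a ≤ OSR.one ↔ a ≠ OSR.inf := by revert a; decide
lemma bar_idem_of {a : OSR} : a.bar ≠ OSR.inf := by revert a; decide

end OSR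
namespace OSR
lemma bot_add' (a : OSR) : add OSR.bot a = OSR.bot := by revert a; decide
lemma add_bot' (a : OSR) : add a OSR.bot = OSR.bot := by revert a; decide
end OSR
namespace OSR
lemma add_mono_right {b b' : OSR} (a : OSR) (h : b ≤ b') : add a b ≤ add a b' := by
  revert h; revert a b b'; decide
lemma add_add_inf {a c : OSR} (ha : a ≠ OSR.bot) (hc : c ≠ OSR.bot) :
    add (add a OSR.inf) c = OSR.inf := by revert ha hc; revert a c; decide
lemma add_inf_sandwich {a c : OSR} (ha : a ≠ OSR.bot) (hc : c ≠ OSR.bot) :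
    add a (add OSR.inf c) = OSR.inf := by revert ha hc; revert a c; decide
lemma bar_eq_one_of {x : OSR} (h1 : x ≠ OSR.bot) (h2 : x ≠ OSR.zero) : x.bar = OSR.one := by
  revert h1 h2; revert x; decide
lemma one_le_add_one {z : OSR} (h : z ≠ OSR.bot) : OSR.one ≤ add OSR.one z := by
  revert h; revert z; decide
lemma sharp_of_bar_one {x : OSR} (h : OSR.one ≤ x.bar) : x.sharp = OSR.inf := by
  revert h; revert x; decide
lemma ne_bot_of_one_le_bar {x : OSR} (h : OSR.one ≤ x.bar) : x ≠ OSR.bot := by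
  revert h; revert x; decide
lemma not_inf_le_one : ¬ (OSR.inf ≤ OSR.one) := by decide
lemma add_inf_inf : add OSR.inf OSR.inf = OSR.inf := by decide
lemma sharp_inf_bar {x : OSR} (h : x.sharp = OSR.inf) (hb : x ≠ OSR.bot) : x.bar = OSR.one := by
  revert h hb; revert x; decide
lemma bar_eq_one_iff {x : OSR} : x.bar = OSR.one ↔ (x = OSR.one ∨ x = OSR.inf) := by
  revert x; decide
end OSR
section OsumLemmas

lemma foldr_sup_le {l : List (Fin n)} {f : Fin n → OSR} {c : OSR}
    (h : ∀ i ∈ l, f i ≤ c) :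
    (l.foldr (fun j acc => OSR.sup (f j) acc) OSR.bot) ≤ c := by
  induction l with
  | nil => exact OSR.bot_le' c
  | cons a l ih =>
      exact OSR.sup_le' (h a (by simp)) (ih (fun i hi => h i (by simp [hi])))

lemma le_foldr_sup {l : List (Fin n)} {f : Fin n → OSR} {i : Fin n} (hi : i ∈ l) :
    f i ≤ l.foldr (fun j acc => OSR.sup (f j) acc) OSR.bot := by
  induction l with
  | nil => simp at hi
  | cons a l ih =>
      rcases List.mem_cons.1 hi with h | h
      · subst h; exact OSR.le_sup_left _ _
      · exact OSR.le_trans' (ih h) (OSR.le_sup_right _ _)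

lemma osum_le {n : ℕ} {f : Fin n → OSR} {c : OSR} (h : ∀ i, f i ≤ c) : osum f ≤ c :=
  foldr_sup_le (fun i _ => h i)

lemma le_osum {n : ℕ} (f : Fin n → OSR) (i : Fin n) : f i ≤ osum f :=
  le_foldr_sup (List.mem_finRange i)

lemma osum_eq_inf {n : ℕ} {f : Fin n → OSR} {i : Fin n} (h : f i = OSR.inf) :
    osum f = OSR.inf :=
  OSR.eq_inf_of_le (h ▸ le_osum f i)

lemma osum_ne_bot {n : ℕ} {f : Fin n → OSR} {i : Fin n} (h : f i ≠ OSR.bot) :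
    osum f ≠ OSR.bot :=
  OSR.ne_bot_of_le h (le_osum f i)

lemma bar_osum {n : ℕ} (f : Fin n → OSR) : (osum f).bar = osum (fun i => (f i).bar) := by
  unfold osum
  induction List.finRange n with
  | nil => rfl
  | cons a l ih => simp only [List.foldr_cons, OSR.bar_sup, ih]

lemma osum_congr {n : ℕ} {f g : Fin n → OSR} (h : ∀ i, f i = g i) : osum f = osum g := by
  have : f = g := funext h
  rw [this]

/-- `barW` is monotone. -/
lemma barW_mono {a b : WithBot ℕ} (h : a ≤ b) : barW a ≤ barW b := by
  induction a with
  | bot => exact OSR.bot_le' _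
  | coe a =>
      induction b with
      | bot => exact absurd h (by simp)
      | coe b =>
          have hab : a ≤ b := by exact_mod_cast h
          show (if a = 0 then OSR.zero else OSR.one) ≤ (if b = 0 then OSR.zero else OSR.one)
          by_cases ha : a = 0
          · subst ha; by_cases hb : b = 0 <;> simp [hb] <;> decide
          · have hb : b ≠ 0 := by omega
            simp [ha, hb]; exact OSR.le_refl' _

lemma barW_bot : barW (⊥ : WithBot ℕ) = OSR.bot := rfl

lemma barW_ne_bot {a : WithBot ℕ} : barW a ≠ OSR.bot ↔ a ≠ ⊥ := by
  induction a with
  | bot => simp [barW_bot]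
  | coe a =>
      constructor
      · intro _; exact WithBot.coe_ne_bot
      · intro _
        show (if a = 0 then OSR.zero else OSR.one) ≠ OSR.bot
        by_cases h : a = 0 <;> simp [h]

lemma barW_add (a b : WithBot ℕ) : barW (a + b) = OSR.add (barW a) (barW b) := by
  induction a with
  | bot => rw [WithBot.bot_add, barW_bot, OSR.bot_add']
  | coe a =>
      induction b with
      | bot => rw [WithBot.add_bot, barW_bot, OSR.add_bot']
      | coe b =>
          rw [← WithBot.coe_add]
          show (if a + b = 0 then OSR.zero else OSR.one) = OSR.add _ _
          show _ = OSR.add (if a = 0 then OSR.zero else OSR.one) (if b = 0 then OSR.zero else OSR.one)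
          by_cases ha : a = 0 <;> by_cases hb : b = 0 <;> simp [ha, hb] <;> rfl

lemma barW_sup {n : ℕ} (f : Fin n → WithBot ℕ) :
    barW (Finset.univ.sup f) = osum (fun i => barW (f i)) := by
  apply OSR.le_antisymm'
  · rcases (Finset.univ : Finset (Fin n)).eq_empty_or_nonempty with h | h
    · rw [h]
      have : n = 0 := by
        by_contra hn
        exact absurd (Finset.mem_univ (⟨0, Nat.pos_of_ne_zero hn⟩ : Fin n)) (by simp [h])
      subst this
      show barW ⊥ ≤ _
      exact OSR.bot_le' _
    · obtain ⟨i, _, hi⟩ := Finset.exists_mem_eq_sup _ h f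
      rw [hi]
      exact le_osum (fun i => barW (f i)) i
  · exact osum_le (fun i => barW_mono (Finset.le_sup (Finset.mem_univ i)))

end OsumLemmas
section WithBotLemmas

lemma coe_zero_wb : (((0:ℕ)) : WithBot ℕ) = (0 : WithBot ℕ) := rfl

lemma smul_coe_nat (s a : ℕ) : s • ((a : ℕ) : WithBot ℕ) = ((s * a : ℕ) : WithBot ℕ) := by
  induction s with
  | zero => rw [zero_nsmul, Nat.zero_mul, coe_zero_wb]
  | succ s ih =>
      rw [succ_nsmul, ih]
      push_cast
      ring

lemma smul_mono_wb (s : ℕ) {a b : WithBot ℕ} (h : a ≤ b) : s • a ≤ s • b :=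
  nsmul_le_nsmul_right h s

lemma smul_bot_wb {s : ℕ} (hs : 1 ≤ s) : s • (⊥ : WithBot ℕ) = ⊥ := by
  obtain ⟨t, rfl⟩ := Nat.exists_eq_add_of_le hs
  rw [add_comm, succ_nsmul, WithBot.add_bot]

lemma smul_zero_goal (v : WithBot ℕ) (xs : ℕ) :
    0 • v + (((0:ℕ)) : WithBot ℕ) ≤ ((xs : ℕ) : WithBot ℕ) := by
  rw [zero_nsmul, coe_zero_wb, zero_add]
  exact_mod_cast Nat.zero_le xs

lemma add_sup_left {ι : Type*} [Fintype ι] (a : WithBot ℕ) (f : ι → WithBot ℕ) :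
    a + Finset.univ.sup f = Finset.univ.sup (fun i => a + f i) := by
  apply le_antisymm
  · rcases (Finset.univ : Finset ι).eq_empty_or_nonempty with h | h
    · rw [h]; simp [WithBot.add_bot]
    · obtain ⟨i, _, hi⟩ := Finset.exists_mem_eq_sup _ h f
      rw [hi]
      exact Finset.le_sup (f := fun i => a + f i) (Finset.mem_univ i)
  · exact Finset.sup_le fun i _ => add_le_add le_rfl (Finset.le_sup (Finset.mem_univ i))

lemma add_sup_right {ι : Type*} [Fintype ι] (a : WithBot ℕ) (f : ι → WithBot ℕ) :
    Finset.univ.sup f + a = Finset.univ.sup (fun i => f i + a) := by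
  apply le_antisymm
  · rcases (Finset.univ : Finset ι).eq_empty_or_nonempty with h | h
    · rw [h]; simp [WithBot.bot_add]
    · obtain ⟨i, _, hi⟩ := Finset.exists_mem_eq_sup _ h f
      rw [hi]
      exact Finset.le_sup (f := fun i => f i + a) (Finset.mem_univ i)
  · exact Finset.sup_le fun i _ => add_le_add (Finset.le_sup (Finset.mem_univ i)) le_rfl

end WithBotLemmas

section MwordLemmas

variable {Sigma : Type} {Q : Type} [Fintype Q] [DecidableEq Q]

lemma mword_nil (A : MPA Sigma Q) (p q : Q) :
    A.mword [] p q = if p = q then ((0 : ℕ) : WithBot ℕ) else ⊥ := rfl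

lemma mword_single (A : MPA Sigma Q) (a : Sigma) (p q : Q) :
    A.mword [a] p q = A.M a p q := by
  show Finset.univ.sup (fun r => A.M a p r + A.mword [] r q) = _
  apply le_antisymm
  · apply Finset.sup_le
    intro r _
    rw [mword_nil]
    by_cases h : r = q
    · subst h
      rw [if_pos rfl, coe_zero_wb, add_zero]
    · rw [if_neg h, WithBot.add_bot]; exact bot_le
  · have := Finset.le_sup (f := fun r => A.M a p r + A.mword [] r q) (Finset.mem_univ q)
    simpa [mword_nil, coe_zero_wb] using this

lemma mword_append (A : MPA Sigma Q) (u v : List Sigma) (p q : Q) :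
    A.mword (u ++ v) p q = Finset.univ.sup (fun r => A.mword u p r + A.mword v r q) := by
  induction u generalizing p with
  | nil =>
      apply le_antisymm
      · have := Finset.le_sup (f := fun r => A.mword [] p r + A.mword v r q) (Finset.mem_univ p)
        simpa [mword_nil, coe_zero_wb] using this
      · apply Finset.sup_le
        intro r _
        rw [mword_nil]
        by_cases h : p = r
        · subst h
          rw [if_pos rfl, coe_zero_wb, zero_add]
          exact le_refl _
        · rw [if_neg h, WithBot.bot_add]; exact bot_le
  | cons a u ih =>
      show Finset.univ.sup (fun r => A.M a p r + A.mword (u ++ v) r q) = _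
      calc Finset.univ.sup (fun r => A.M a p r + A.mword (u ++ v) r q)
          = Finset.univ.sup (fun r => Finset.univ.sup
              (fun t => (A.M a p r + A.mword u r t) + A.mword v t q)) := by
            apply Finset.sup_congr rfl
            intro r _
            rw [ih, add_sup_left]
            congr 1
            funext t
            rw [add_assoc]
        _ = Finset.univ.sup (fun t => Finset.univ.sup
              (fun r => (A.M a p r + A.mword u r t) + A.mword v t q)) := Finset.sup_comm _ _ _
        _ = Finset.univ.sup (fun t => (Finset.univ.sup
              (fun r => A.M a p r + A.mword u r t)) + A.mword v t q) := by
            apply Finset.sup_congr rfl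
            intro t _
            rw [add_sup_right]
        _ = Finset.univ.sup (fun t => A.mword (a :: u) p t + A.mword v t q) := rfl

/-- Determinism: reading a word from a fixed state reaches at most one state. -/
lemma det_unique {A : MPA Sigma Q} (hdet : A.Deterministic) (w : List Sigma) (p q r : Q)
    (hq : A.mword w p q ≠ ⊥) (hr : A.mword w p r ≠ ⊥) : q = r := by
  induction w generalizing p with
  | nil =>
      rw [mword_nil] at hq hr
      by_cases h1 : p = q
      · by_cases h2 : p = r
        · rw [← h1, ← h2]
        · rw [if_neg h2] at hr; exact absurd rfl hr
      · rw [if_neg h1] at hq; exact absurd rfl hq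
  | cons a w ih =>
      have hq' : ∃ t, A.M a p t + A.mword w t q ≠ ⊥ := by
        by_contra h
        push_neg at h
        exact hq ((Finset.sup_eq_bot_iff _ _).2 (fun t _ => h t))
      have hr' : ∃ t, A.M a p t + A.mword w t r ≠ ⊥ := by
        by_contra h
        push_neg at h
        exact hr ((Finset.sup_eq_bot_iff _ _).2 (fun t _ => h t))
      obtain ⟨t1, ht1⟩ := hq'
      obtain ⟨t2, ht2⟩ := hr'
      have ha1 : A.M a p t1 ≠ ⊥ := fun h => ht1 (by rw [h, WithBot.bot_add])
      have ha2 : A.M a p t2 ≠ ⊥ := fun h => ht2 (by rw [h, WithBot.bot_add])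
      have hb1 : A.mword w t1 q ≠ ⊥ := fun h => ht1 (by rw [h, WithBot.add_bot])
      have hb2 : A.mword w t2 r ≠ ⊥ := fun h => ht2 (by rw [h, WithBot.add_bot])
      have : t1 = t2 := hdet.2 a p t1 t2 ha1 ha2
      subst this
      exact ih t1 hb1 hb2

/-- For deterministic runs: concatenation with a known run. -/
lemma mword_append_det {A : MPA Sigma Q} (hdet : A.Deterministic) (u v : List Sigma)
    (p q q' : Q) (x : ℕ) (hu : A.mword u p q = ((x : ℕ) : WithBot ℕ)) :
    A.mword (u ++ v) p q' = ((x : ℕ) : WithBot ℕ) + A.mword v q q' := by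
  rw [mword_append]
  apply le_antisymm
  · apply Finset.sup_le
    intro r _
    by_cases h : A.mword u p r = ⊥
    · rw [h, WithBot.bot_add]; exact bot_le
    · have : r = q := det_unique hdet u p r q h (by rw [hu]; exact WithBot.natCast_ne_bot x)
      subst this
      rw [hu]
  · have := Finset.le_sup (f := fun r => A.mword u p r + A.mword v r q') (Finset.mem_univ q)
    rw [hu] at this
    exact this

end MwordLemmas
section MatrixLemmas

lemma omul_apply {n : ℕ} (M N : Fin n → Fin n → OSR) (i k : Fin n) :
    omul M N i k = osum (fun j => OSR.add (M i j) (N j k)) := rfl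

lemma obar_apply {n : ℕ} (M : Fin n → Fin n → OSR) (i j : Fin n) :
    obar M i j = (M i j).bar := rfl

lemma obar_omul {n : ℕ} (M N : Fin n → Fin n → OSR) :
    obar (omul M N) = omul (obar M) (obar N) := by
  funext i k
  show (osum fun j => OSR.add (M i j) (N j k)).bar = osum fun j => OSR.add (M i j).bar (N j k).bar
  rw [bar_osum]
  exact osum_congr fun j => OSR.bar_add _ _

lemma obar_obar {n : ℕ} (M : Fin n → Fin n → OSR) : obar (obar M) = obar M := by
  funext i j
  exact OSR.bar_bar _

lemma obar_mdiagSharp {n : ℕ} (M : Fin n → Fin n → OSR) : obar (mdiagSharp M) = obar M := by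
  funext i j
  show (mdiagSharp M i j).bar = (M i j).bar
  unfold mdiagSharp
  by_cases h : i = j
  · rw [if_pos h, OSR.bar_sharp]
  · rw [if_neg h]

lemma obar_mangle {n : ℕ} (M : Fin n → Fin n → OSR) : obar (mangle M) = obar M := by
  funext i j
  show (mangle M i j).bar = (M i j).bar
  unfold mangle
  by_cases h : i = j
  · rw [if_pos h]
  · rw [if_neg h, OSR.bar_bar]

lemma obar_mstab {n : ℕ} (M : Fin n → Fin n → OSR)
    (hidem : omul (obar M) (obar M) = obar M) : obar (mstab M) = obar M := by
  unfold mstab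
  simp only [obar_omul, obar_mdiagSharp, hidem]

lemma obar_mflat {n : ℕ} (M : Fin n → Fin n → OSR)
    (hidem : omul (obar M) (obar M) = obar M) : obar (mflat M) = obar M := by
  unfold mflat
  simp only [obar_omul, obar_mangle, obar_obar, hidem]

end MatrixLemmas

section Wpow

variable {Sigma : Type} {nB : ℕ}

/-- `w^m`. -/
def wpow (w : List Sigma) : ℕ → List Sigma
  | 0 => []
  | m + 1 => w ++ wpow w m

lemma bmul (B : MPA Sigma (Fin nB)) (u v : List Sigma) (k l : Fin nB) :
    barW (B.mword (u ++ v) k l)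
      = osum (fun r => OSR.add (barW (B.mword u k r)) (barW (B.mword v r l))) := by
  rw [mword_append, barW_sup]
  exact osum_congr fun r => barW_add _ _

lemma powbar (B : MPA Sigma (Fin nB)) (w : List Sigma) (M : Fin nB → Fin nB → OSR)
    (hbar : ∀ k l, barW (B.mword w k l) = obar M k l)
    (hidem : omul (obar M) (obar M) = obar M) :
    ∀ m, 1 ≤ m → ∀ k l, barW (B.mword (wpow w m) k l) = obar M k l := by
  intro m
  induction m with
  | zero => omega
  | succ m ih =>
      intro _ k l
      rcases Nat.eq_zero_or_pos m with hm | hm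
      · subst hm
        show barW (B.mword (w ++ []) k l) = _
        rw [List.append_nil]
        exact hbar k l
      · show barW (B.mword (w ++ wpow w m) k l) = _
        rw [bmul]
        have : (fun r => OSR.add (barW (B.mword w k r)) (barW (B.mword (wpow w m) r l)))
            = fun r => OSR.add (obar M k r) (obar M r l) := by
          funext r
          rw [hbar, ih hm]
        rw [this]
        show omul (obar M) (obar M) k l = _
        rw [hidem]

lemma apow {QA : Type} [Fintype QA] [DecidableEq QA] {A : MPA Sigma QA}
    (hdet : A.Deterministic) (w : List Sigma) (p : QA) (x : ℕ)
    (hu : A.mword w p p = ((x : ℕ) : WithBot ℕ)) :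
    ∀ m, A.mword (wpow w m) p p = ((m * x : ℕ) : WithBot ℕ) := by
  intro m
  induction m with
  | zero =>
      show A.mword [] p p = _
      rw [mword_nil, if_pos rfl]
      norm_num
  | succ m ih =>
      show A.mword (w ++ wpow w m) p p = _
      rw [mword_append_det hdet w (wpow w m) p p p x hu, ih]
      push_cast
      ring

end Wpow
section Path

/-- `u` is relevant for the pair `(i0, j0)`. -/
def RelP {n : ℕ} (M : Fin n → Fin n → OSR) (i0 j0 u : Fin n) : Prop :=
  (obar M i0 u ≠ OSR.bot ∨ u = i0) ∧ (obar M u j0 ≠ OSR.bot ∨ u = j0)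

/-- Number of relevant `∞`-edges reachable from `i`. -/
noncomputable def rho {n : ℕ} (P : OSR → Prop) (M : Fin n → Fin n → OSR)
    (i0 j0 i : Fin n) : ℕ :=
  (Finset.univ.filter (fun kl : Fin n × Fin n =>
    RelP M i0 j0 kl.1 ∧ RelP M i0 j0 kl.2 ∧ (¬ P (M kl.1 kl.2) ∧ M kl.1 kl.2 ≠ OSR.bot) ∧
      (obar M i kl.1 ≠ OSR.bot ∨ i = kl.1))).card

lemma rho_le {n : ℕ} (P : OSR → Prop) (M : Fin n → Fin n → OSR) (i0 j0 i : Fin n) :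
    rho P M i0 j0 i ≤ n * n := by
  have := Finset.card_filter_le (Finset.univ : Finset (Fin n × Fin n))
    (fun kl : Fin n × Fin n =>
      RelP M i0 j0 kl.1 ∧ RelP M i0 j0 kl.2 ∧ (¬ P (M kl.1 kl.2) ∧ M kl.1 kl.2 ≠ OSR.bot) ∧
        (obar M i kl.1 ≠ OSR.bot ∨ i = kl.1))
  simpa [rho, Finset.card_univ] using this

lemma obar_trans {n : ℕ} {M : Fin n → Fin n → OSR}
    (hidem : omul (obar M) (obar M) = obar M) {a b c : Fin n}
    (h1 : obar M a b ≠ OSR.bot) (h2 : obar M b c ≠ OSR.bot) : obar M a c ≠ OSR.bot := by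
  have he : omul (obar M) (obar M) a c = obar M a c := by rw [hidem]
  rw [← he]
  exact osum_ne_bot (i := b) (OSR.add_ne_bot h1 h2)

lemma rho_mono {n : ℕ} {P : OSR → Prop} {M : Fin n → Fin n → OSR}
    (hidem : omul (obar M) (obar M) = obar M) {i0 j0 i l : Fin n}
    (hil : obar M i l ≠ OSR.bot) : rho P M i0 j0 l ≤ rho P M i0 j0 i := by
  apply Finset.card_le_card
  intro kl hkl
  rw [Finset.mem_filter] at hkl ⊢
  obtain ⟨hu, h1, h2, h3, h4⟩ := hkl
  refine ⟨hu, h1, h2, h3, ?_⟩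
  left
  rcases h4 with h | h
  · exact obar_trans hidem hil h
  · rw [← h]; exact hil

lemma rho_strict {n : ℕ} {P : OSR → Prop} {M : Fin n → Fin n → OSR}
    (hidem : omul (obar M) (obar M) = obar M) {i0 j0 i l : Fin n}
    (hRi : RelP M i0 j0 i) (hRl : RelP M i0 j0 l) (hnP : ¬ P (M i l)) (hnb : M i l ≠ OSR.bot)
    (hil : obar M i l ≠ OSR.bot)
    (hnr : obar M l i = OSR.bot ∧ l ≠ i) : rho P M i0 j0 l < rho P M i0 j0 i := by
  apply Finset.card_lt_card
  rw [Finset.ssubset_iff_of_subset]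
  · refine ⟨(i, l), ?_, ?_⟩
    · rw [Finset.mem_filter]
      exact ⟨Finset.mem_univ _, hRi, hRl, ⟨hnP, hnb⟩, Or.inr rfl⟩
    · rw [Finset.mem_filter]
      rintro ⟨-, -, -, -, h⟩
      rcases h with h | h
      · exact h hnr.1
      · exact hnr.2 h
  · intro kl hkl
    rw [Finset.mem_filter] at hkl ⊢
    obtain ⟨hu, h1, h2, h3, h4⟩ := hkl
    refine ⟨hu, h1, h2, h3, ?_⟩
    left
    rcases h4 with h | h
    · exact obar_trans hidem hil h
    · rw [← h]; exact hil

lemma path_bound {Sigma : Type} {nB : ℕ} (B : MPA Sigma (Fin nB))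
    (w : List Sigma) (M : Fin nB → Fin nB → OSR)
    (hidem : omul (obar M) (obar M) = obar M)
    (hbar : ∀ k l, barW (B.mword w k l) = obar M k l)
    (P : OSR → Prop) (V Wt : ℕ)
    (hV : ∀ k l, P (M k l) → B.mword w k l ≤ ((V : ℕ) : WithBot ℕ))
    (hW : ∀ k l, B.mword w k l ≤ ((Wt : ℕ) : WithBot ℕ))
    (i0 j0 : Fin nB)
    (H : ∀ k l, RelP M i0 j0 k → RelP M i0 j0 l → ¬ P (M k l) → M k l ≠ OSR.bot →
      obar M l k = OSR.bot ∧ l ≠ k) :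
    ∀ m i, RelP M i0 j0 i →
      B.mword (wpow w m) i j0 ≤ ((rho P M i0 j0 i * Wt + m * V : ℕ) : WithBot ℕ) := by
  intro m
  induction m with
  | zero =>
      intro i _
      show B.mword [] i j0 ≤ _
      rw [mword_nil]
      by_cases h : i = j0
      · rw [if_pos h]
        exact_mod_cast Nat.zero_le _
      · rw [if_neg h]
        exact bot_le
  | succ m ih =>
      intro i hRi
      show B.mword (w ++ wpow w m) i j0 ≤ _
      rw [mword_append]
      apply Finset.sup_le
      intro l _
      by_cases h1 : B.mword w i l = ⊥
      · rw [h1, WithBot.bot_add]; exact bot_le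
      by_cases h2 : B.mword (wpow w m) l j0 = ⊥
      · rw [h2, WithBot.add_bot]; exact bot_le
      have hMil : obar M i l ≠ OSR.bot := by
        rw [← hbar i l]
        exact barW_ne_bot.mpr h1
      have hMil' : M i l ≠ OSR.bot := OSR.bar_ne_bot.mp hMil
      have hRl : RelP M i0 j0 l := by
        constructor
        · left
          rcases hRi.1 with h | h
          · exact obar_trans hidem h hMil
          · rw [← h]; exact hMil
        · rcases Nat.eq_zero_or_pos m with hm | hm
          · right
            subst hm
            have : B.mword [] l j0 ≠ ⊥ := h2
            rw [mword_nil] at this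
            by_contra hc
            rw [if_neg hc] at this
            exact this rfl
          · left
            rw [← powbar B w M hbar hidem m hm l j0]
            exact barW_ne_bot.mpr h2
      by_cases hcheap : P (M i l)
      case neg =>
        have hlt : rho P M i0 j0 l < rho P M i0 j0 i :=
          rho_strict hidem hRi hRl hcheap hMil' hMil (H i l hRi hRl hcheap hMil')
        calc B.mword w i l + B.mword (wpow w m) l j0
            ≤ ((Wt : ℕ) : WithBot ℕ) + ((rho P M i0 j0 l * Wt + m * V : ℕ) : WithBot ℕ) :=
              add_le_add (hW i l) (ih l hRl)
          _ ≤ ((rho P M i0 j0 i * Wt + (m + 1) * V : ℕ) : WithBot ℕ) := by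
              have h3 : (rho P M i0 j0 l + 1) * Wt ≤ rho P M i0 j0 i * Wt :=
                Nat.mul_le_mul_right _ hlt
              have h4 : Wt + (rho P M i0 j0 l * Wt + m * V)
                  ≤ rho P M i0 j0 i * Wt + (m + 1) * V := by nlinarith
              exact_mod_cast h4
      case pos =>
        have hmono : rho P M i0 j0 l ≤ rho P M i0 j0 i := rho_mono hidem hMil
        calc B.mword w i l + B.mword (wpow w m) l j0
            ≤ ((V : ℕ) : WithBot ℕ) + ((rho P M i0 j0 l * Wt + m * V : ℕ) : WithBot ℕ) :=
              add_le_add (hV i l hcheap) (ih l hRl)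
          _ ≤ ((rho P M i0 j0 i * Wt + (m + 1) * V : ℕ) : WithBot ℕ) := by
              have h4 : V + (rho P M i0 j0 l * Wt + m * V)
                  ≤ rho P M i0 j0 i * Wt + (m + 1) * V := by nlinarith
              exact_mod_cast h4

end Path
section Derivations

lemma mstab_ge {n : ℕ} (M : Fin n → Fin n → OSR) (i j k : Fin n) :
    OSR.add (OSR.add (M i k) (mdiagSharp M k k)) (M k j) ≤ mstab M i j := by
  have h1 : OSR.add (M i k) (mdiagSharp M k k) ≤ omul M (mdiagSharp M) i k :=
    le_osum (fun t => OSR.add (M i t) (mdiagSharp M t k)) k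
  have h2 := OSR.add_mono_left (M k j) h1
  exact OSR.le_trans' h2
    (le_osum (fun t => OSR.add (omul M (mdiagSharp M) i t) (M t j)) k)

lemma mflat_ge {n : ℕ} (M : Fin n → Fin n → OSR) (i j k : Fin n) :
    OSR.add (obar M i k)
      (OSR.add (mangle (omul M (omul M M)) k k) (obar M k j)) ≤ mflat M i j := by
  have h1 : OSR.add (mangle (omul M (omul M M)) k k) (obar M k j)
      ≤ omul (mangle (omul M (omul M M))) (obar M) k j :=
    le_osum (fun t => OSR.add (mangle (omul M (omul M M)) k t) (obar M t j)) k
  have h2 := OSR.add_mono_right (obar M i k) h1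
  exact OSR.le_trans' h2
    (le_osum (fun t => OSR.add (obar M i t) (omul (mangle (omul M (omul M M))) (obar M) t j)) k)

lemma stab_H {n : ℕ} {M : Fin n → Fin n → OSR}
    (hidem : omul (obar M) (obar M) = obar M) (i j : Fin n)
    (hle : mstab M i j ≤ OSR.one) :
    ∀ k l, RelP M i j k → RelP M i j l → ¬ (M k l = OSR.zero) → M k l ≠ OSR.bot →
      obar M l k = OSR.bot ∧ l ≠ k := by
  intro k l hRk hRl hnz hnb
  by_contra hcon
  have hcon' : obar M l k ≠ OSR.bot ∨ l = k := by tauto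
  have hbar_kl : (M k l).bar = OSR.one := OSR.bar_eq_one_of hnb hnz
  have hkk : OSR.one ≤ obar M k k := by
    rcases hcon' with h | h
    · have step : OSR.add (obar M k l) (obar M l k) ≤ obar M k k := by
        have h0 := le_osum (fun t => OSR.add (obar M k t) (obar M t k)) l
        have h1 : omul (obar M) (obar M) k k = obar M k k := by rw [hidem]
        exact h1 ▸ h0
      refine OSR.le_trans' ?_ step
      show OSR.one ≤ OSR.add (M k l).bar (obar M l k)
      rw [hbar_kl]
      exact OSR.one_le_add_one h
    · subst h
      show OSR.one ≤ (M l l).bar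
      rw [hbar_kl]
      exact OSR.le_refl' _
  have hsharp : (M k k).sharp = OSR.inf := OSR.sharp_of_bar_one hkk
  have hkk_nb : M k k ≠ OSR.bot := OSR.ne_bot_of_one_le_bar hkk
  have h1 : M i k ≠ OSR.bot := by
    rcases hRk.1 with h | h
    · exact OSR.bar_ne_bot.mp h
    · rw [h] at hkk_nb ⊢; exact hkk_nb
  have h2 : M k j ≠ OSR.bot := by
    rcases hRk.2 with h | h
    · exact OSR.bar_ne_bot.mp h
    · rw [← h]; exact hkk_nb
  have hterm : OSR.add (OSR.add (M i k) (mdiagSharp M k k)) (M k j) = OSR.inf := by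
    have hd : mdiagSharp M k k = (M k k).sharp := if_pos rfl
    rw [hd, hsharp]
    exact OSR.add_add_inf h1 h2
  have hbig : OSR.inf ≤ mstab M i j := hterm ▸ mstab_ge M i j k
  exact OSR.not_inf_le_one (OSR.le_trans' hbig hle)

lemma flat_H {n : ℕ} {M : Fin n → Fin n → OSR}
    (hidem : omul (obar M) (obar M) = obar M) (i j : Fin n)
    (hle : mflat M i j ≤ OSR.one) :
    ∀ k l, RelP M i j k → RelP M i j l → ¬ (M k l ≠ OSR.inf) → M k l ≠ OSR.bot →
      obar M l k = OSR.bot ∧ l ≠ k := by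
  intro k l hRk hRl hnP hnb
  have hinf : M k l = OSR.inf := not_not.mp hnP
  by_contra hcon
  have hcon' : obar M l k ≠ OSR.bot ∨ l = k := by tauto
  have hbar_kl : obar M k l ≠ OSR.bot := by
    show (M k l).bar ≠ OSR.bot
    rw [hinf]
    decide
  have hkk_bar : obar M k k ≠ OSR.bot := by
    rcases hcon' with h | h
    · exact obar_trans hidem hbar_kl h
    · rw [h] at hbar_kl; exact hbar_kl
  have hM3 : omul M (omul M M) k k = OSR.inf := by
    rcases hcon' with h | h
    · have h2 : omul M M l k ≠ OSR.bot := by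
        have hb : obar (omul M M) l k = obar M l k := by rw [obar_omul, hidem]
        have : obar (omul M M) l k ≠ OSR.bot := by rw [hb]; exact h
        exact OSR.bar_ne_bot.mp this
      exact osum_eq_inf (i := l) (OSR.add_inf_left h2 _ hinf)
    · subst h
      have hmm : omul M M l l = OSR.inf :=
        osum_eq_inf (i := l) (by rw [hinf]; exact OSR.add_inf_inf)
      exact osum_eq_inf (i := l) (by rw [hinf, hmm]; exact OSR.add_inf_inf)
  have h1 : obar M i k ≠ OSR.bot := by
    rcases hRk.1 with h | h
    · exact h
    · rw [h] at hkk_bar ⊢; exact hkk_bar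
  have h2 : obar M k j ≠ OSR.bot := by
    rcases hRk.2 with h | h
    · exact h
    · rw [← h]; exact hkk_bar
  have hterm : OSR.add (obar M i k)
      (OSR.add (mangle (omul M (omul M M)) k k) (obar M k j)) = OSR.inf := by
    have hd : mangle (omul M (omul M M)) k k = omul M (omul M M) k k := if_pos rfl
    rw [hd, hM3]
    exact OSR.add_inf_sandwich h1 h2
  have hbig : OSR.inf ≤ mflat M i j := hterm ▸ mflat_ge M i j k
  exact OSR.not_inf_le_one (OSR.le_trans' hbig hle)

end Derivations

section SmallFacts

lemma barNat_bar (x : ℕ) : (barNat x).bar = barNat x := by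
  unfold barNat
  by_cases h : x = 0 <;> simp [h] <;> rfl

lemma barNat_ne_bot (x : ℕ) : barNat x ≠ OSR.bot := by
  unfold barNat
  by_cases h : x = 0 <;> simp [h]

lemma barNat_ne_inf (x : ℕ) : barNat x ≠ OSR.inf := by
  unfold barNat
  by_cases h : x = 0 <;> simp [h]

lemma barW_coe (x : ℕ) : barW ((x : ℕ) : WithBot ℕ) = barNat x := rfl

lemma barNat_add (a b : ℕ) : barNat (a + b) = OSR.add (barNat a) (barNat b) := by
  have h := barW_add ((a : ℕ) : WithBot ℕ) ((b : ℕ) : WithBot ℕ)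
  rw [barW_coe, barW_coe] at h
  rw [← h]
  have : ((a : ℕ) : WithBot ℕ) + ((b : ℕ) : WithBot ℕ) = (((a + b : ℕ)) : WithBot ℕ) := by
    push_cast; ring
  rw [this, barW_coe]

lemma barNat_one_le {x : ℕ} (h : barNat x = OSR.one) : 1 ≤ x := by
  by_contra hc
  have : x = 0 := by omega
  rw [this] at h
  exact absurd h (by unfold barNat; simp)

lemma barNat_mul {m x : ℕ} (hm : 1 ≤ m) : barNat (m * x) = barNat x := by
  unfold barNat
  by_cases h : x = 0
  · simp [h]
  · have : m * x ≠ 0 := Nat.mul_ne_zero (by omega) h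
    simp [h, this]

lemma barW_bar (b : WithBot ℕ) : (barW b).bar = barW b := by
  induction b with
  | bot => rfl
  | coe a =>
      show (if a = 0 then OSR.zero else OSR.one).bar = (if a = 0 then OSR.zero else OSR.one)
      by_cases h : a = 0 <;> simp [h] <;> rfl

lemma barW_eq_bot {b : WithBot ℕ} (h : barW b = OSR.bot) : b = ⊥ := by
  by_contra hc
  exact barW_ne_bot.mpr hc h

lemma barW_eq_zero {b : WithBot ℕ} (h : barW b = OSR.zero) : b = ((0 : ℕ) : WithBot ℕ) := by
  induction b with
  | bot => exact absurd h (by rw [barW_bot]; decide)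
  | coe a =>
      have : (if a = 0 then OSR.zero else OSR.one) = OSR.zero := h
      by_cases ha : a = 0
      · subst ha; rfl
      · rw [if_neg ha] at this; exact absurd this (by decide)

lemma wb_cases {b : WithBot ℕ} (h : b ≠ ⊥) : ∃ v : ℕ, b = ((v : ℕ) : WithBot ℕ) := by
  induction b with
  | bot => exact absurd rfl h
  | coe a => exact ⟨a, rfl⟩

lemma unbot'_coe (v : ℕ) : ((v : ℕ) : WithBot ℕ).unbotD 0 = v := rfl

end SmallFacts
section Pump

lemma le_coe_sup {ι : Type*} [Fintype ι] (f : ι → WithBot ℕ) (i : ι) :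
    f i ≤ ((Finset.univ.sup (fun x => (f x).unbotD 0) : ℕ) : WithBot ℕ) := by
  rcases hfi : f i with _ | v
  · exact bot_le
  · have h := Finset.le_sup (f := fun x => (f x).unbotD 0) (Finset.mem_univ i)
    rw [hfi] at h
    show ((v : ℕ) : WithBot ℕ) ≤ _
    exact_mod_cast h

lemma pump3 {Sigma : Type} {nB : ℕ} (B : MPA Sigma (Fin nB))
    (M : Fin nB → Fin nB → OSR) (w : List Sigma) (xw s V Wt : ℕ) (hs : 1 ≤ s)
    (hidem : omul (obar M) (obar M) = obar M)
    (hbar : ∀ k l, barW (B.mword w k l) = obar M k l)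
    (hW : ∀ k l, B.mword w k l ≤ ((Wt : ℕ) : WithBot ℕ))
    (i j : Fin nB) (P : OSR → Prop)
    (hV : ∀ k l, P (M k l) → B.mword w k l ≤ ((V : ℕ) : WithBot ℕ))
    (hclm : 1 + s * V ≤ xw)
    (H : ∀ k l, RelP M i j k → RelP M i j l → ¬ P (M k l) → M k l ≠ OSR.bot →
      obar M l k = OSR.bot ∧ l ≠ k) :
    s • B.mword (wpow w (s * (nB * nB * Wt + 1))) i j + ((s : ℕ) : WithBot ℕ)
      ≤ ((s * (nB * nB * Wt + 1) * xw : ℕ) : WithBot ℕ) := by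
  have hm1 : 1 ≤ s * (nB * nB * Wt + 1) := by
    have := Nat.mul_le_mul hs (Nat.le_add_left 1 (nB * nB * Wt))
    simpa using this
  by_cases hrel : obar M i j ≠ OSR.bot ∨ i = j
  · have hRi : RelP M i j i := ⟨Or.inr rfl, hrel⟩
    have hb := path_bound B w M hidem hbar P V Wt hV hW i j H (s * (nB * nB * Wt + 1)) i hRi
    have hrho := rho_le P M i j i
    have step1 : s • B.mword (wpow w (s * (nB * nB * Wt + 1))) i j
        ≤ ((s * (rho P M i j i * Wt + (s * (nB * nB * Wt + 1)) * V) : ℕ) : WithBot ℕ) := by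
      have := smul_mono_wb s hb
      rwa [smul_coe_nat] at this
    have key : s * (rho P M i j i * Wt + (s * (nB * nB * Wt + 1)) * V) + s
        ≤ s * (nB * nB * Wt + 1) * xw := by
      have h1 : s * (rho P M i j i * Wt) ≤ s * (nB * nB * Wt) :=
        Nat.mul_le_mul_left _ (Nat.mul_le_mul_right _ hrho)
      have h2 : (s * (nB * nB * Wt + 1)) * (1 + s * V) ≤ (s * (nB * nB * Wt + 1)) * xw :=
        Nat.mul_le_mul_left _ hclm
      calc s * (rho P M i j i * Wt + (s * (nB * nB * Wt + 1)) * V) + s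
          = (s * (rho P M i j i * Wt) + s) + (s * (nB * nB * Wt + 1)) * (s * V) := by ring
        _ ≤ (s * (nB * nB * Wt) + s) + (s * (nB * nB * Wt + 1)) * (s * V) := by omega
        _ = (s * (nB * nB * Wt + 1)) * (1 + s * V) := by ring
        _ ≤ (s * (nB * nB * Wt + 1)) * xw := h2
    calc s • B.mword (wpow w (s * (nB * nB * Wt + 1))) i j + ((s : ℕ) : WithBot ℕ)
        ≤ ((s * (rho P M i j i * Wt + (s * (nB * nB * Wt + 1)) * V) : ℕ) : WithBot ℕ)
            + ((s : ℕ) : WithBot ℕ) := add_le_add step1 le_rfl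
      _ ≤ ((s * (nB * nB * Wt + 1) * xw : ℕ) : WithBot ℕ) := by exact_mod_cast key
  · rw [not_or] at hrel
    have hbw : B.mword (wpow w (s * (nB * nB * Wt + 1))) i j = ⊥ := by
      apply barW_eq_bot
      rw [powbar B w M hbar hidem _ hm1 i j]
      exact not_not.mp hrel.1
    rw [hbw, smul_bot_wb hs, WithBot.bot_add]
    exact bot_le

end Pump

section MulCore

variable {Sigma QA : Type} [Fintype QA] [DecidableEq QA] {nB : ℕ}

lemma mul_core (A : MPA Sigma QA) (B : MPA Sigma (Fin nB)) (hdet : A.Deterministic)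
    (e1 e2 : Elem QA nB) (hq : e1.q = e2.p) (s : ℕ)
    (w1 w2 : List Sigma) (x1 x2 : ℕ)
    (h11 : A.mword w1 e1.p e1.q = ((x1 : ℕ) : WithBot ℕ))
    (h12 : barNat x1 = e1.x.bar)
    (h13 : ∀ i j, barW (B.mword w1 i j) = (e1.M i j).bar)
    (h21 : A.mword w2 e2.p e2.q = ((x2 : ℕ) : WithBot ℕ))
    (h22 : barNat x2 = e2.x.bar)
    (h23 : ∀ i j, barW (B.mword w2 i j) = (e2.M i j).bar)
    (h3 : ∀ i k j : Fin nB, e1.M i k ≤ OSR.one → e2.M k j ≤ OSR.one →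
      B.mword w1 i k ≠ ⊥ → B.mword w2 k j ≠ ⊥ → OSR.add e1.x e2.x = OSR.inf →
        s • (B.mword w1 i k + B.mword w2 k j) + ((s : ℕ) : WithBot ℕ)
          ≤ ((x1 + x2 : ℕ) : WithBot ℕ)) :
    A.mword (w1 ++ w2) (eprod e1 e2).p (eprod e1 e2).q = ((x1 + x2 : ℕ) : WithBot ℕ) ∧
    barNat (x1 + x2) = (Elem.x (eprod e1 e2)).bar ∧
    (∀ i j, barW (B.mword (w1 ++ w2) i j) = ((eprod e1 e2).M i j).bar) ∧
    ((eprod e1 e2).x = OSR.inf → ∀ i j, (eprod e1 e2).M i j ≤ OSR.one →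
      s • B.mword (w1 ++ w2) i j + ((s : ℕ) : WithBot ℕ) ≤ ((x1 + x2 : ℕ) : WithBot ℕ)) := by
  refine ⟨?_, ?_, ?_, ?_⟩
  · show A.mword (w1 ++ w2) e1.p e2.q = _
    rw [mword_append_det hdet w1 w2 e1.p e1.q e2.q x1 h11, hq, h21]
    push_cast
    ring
  · show barNat (x1 + x2) = (OSR.add e1.x e2.x).bar
    rw [barNat_add, OSR.bar_add, h12, h22]
  · intro i j
    show barW (B.mword (w1 ++ w2) i j) = (omul e1.M e2.M i j).bar
    rw [bmul]
    have hrhs : (omul e1.M e2.M i j).bar = omul (obar e1.M) (obar e2.M) i j := by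
      have := congrFun (congrFun (obar_omul e1.M e2.M) i) j
      exact this
    rw [hrhs]
    show _ = osum fun r => OSR.add (obar e1.M i r) (obar e2.M r j)
    apply osum_congr
    intro r
    rw [h13, h23]
    rfl
  · intro hxinf i j hle
    show s • B.mword (w1 ++ w2) i j + _ ≤ _
    rw [mword_append]
    have hne : (Finset.univ : Finset (Fin nB)).Nonempty := ⟨i, Finset.mem_univ i⟩
    obtain ⟨k, -, hk⟩ := Finset.exists_mem_eq_sup Finset.univ hne
      (fun r => B.mword w1 i r + B.mword w2 r j)
    rw [hk]
    rcases Nat.eq_zero_or_pos s with hs | hs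
    · subst hs
      exact smul_zero_goal _ _
    by_cases hb1 : B.mword w1 i k = ⊥
    · rw [hb1, WithBot.bot_add, smul_bot_wb hs, WithBot.bot_add]
      exact bot_le
    by_cases hb2 : B.mword w2 k j = ⊥
    · rw [hb2, WithBot.add_bot, smul_bot_wb hs, WithBot.bot_add]
      exact bot_le
    have hM1 : e1.M i k ≠ OSR.bot := by
      rw [← OSR.bar_ne_bot, ← h13 i k]
      exact barW_ne_bot.mpr hb1
    have hM2 : e2.M k j ≠ OSR.bot := by
      rw [← OSR.bar_ne_bot, ← h23 k j]
      exact barW_ne_bot.mpr hb2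
    have hle' : OSR.add (e1.M i k) (e2.M k j) ≤ OSR.one :=
      OSR.le_trans' (le_osum (fun r => OSR.add (e1.M i r) (e2.M r j)) k) hle
    obtain ⟨ho1, ho2⟩ := OSR.add_le_one hle' hM1 hM2
    exact h3 i k j ho1 ho2 hb1 hb2 hxinf

end MulCore

/-- for every element `(p,x,q,M)` of `I_{A,B}` and every `s ∈ ℕ` there are a word
`w_s` and `x_s ∈ ℕ` such that (1) `A` has a run from `p` to `q` on `w_s` of weight `x_s` with
`bar x = bar x_s`; (2) `bar(M_B(w_s)) = bar M`; (3) if `x = ∞` then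
`x_s ≥ s·(M_B(w_s))_{i,j} + s` whenever `M_{i,j} ≤ 1`. -/
theorem words_construct {Sigma QA : Type} [Fintype Sigma] [Fintype QA] [DecidableEq QA]
    {nB : ℕ} (A : MPA Sigma QA) (B : MPA Sigma (Fin nB))
    (hdet : A.Deterministic) (hB : ∀ v : List Sigma, B.func v ≠ ⊥) :
    ∀ e : Elem QA nB, InAsympO A B (some e) → ∀ s : ℕ,
      ∃ (ws : List Sigma) (xs : ℕ),
        A.mword ws e.p e.q = ((xs : ℕ) : WithBot ℕ) ∧
        barNat xs = (Elem.x e).bar ∧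
        (∀ i j : Fin nB, barW (B.mword ws i j) = (e.M i j).bar) ∧
        (e.x = OSR.inf → ∀ i j : Fin nB, e.M i j ≤ OSR.one →
          s • B.mword ws i j + ((s : ℕ) : WithBot ℕ) ≤ ((xs : ℕ) : WithBot ℕ)) := by
  have key : ∀ o, InAsympO A B o → ∀ e : Elem QA nB, o = some e → ∀ s : ℕ,
      ∃ (ws : List Sigma) (xs : ℕ),
        A.mword ws e.p e.q = ((xs : ℕ) : WithBot ℕ) ∧
        barNat xs = (Elem.x e).bar ∧
        (∀ i j : Fin nB, barW (B.mword ws i j) = (e.M i j).bar) ∧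
        (e.x = OSR.inf → ∀ i j : Fin nB, e.M i j ≤ OSR.one →
          s • B.mword ws i j + ((s : ℕ) : WithBot ℕ) ≤ ((xs : ℕ) : WithBot ℕ)) := by
    intro o ho
    induction ho with
    | gen e hg =>
        intro e' heq s
        obtain rfl : e = e' := Option.some.inj heq
        obtain ⟨a, p, q, x, hM, rfl⟩ := hg
        refine ⟨[a], x, ?_, ?_, ?_, ?_⟩
        · show A.mword [a] p q = _
          rw [mword_single]
          exact hM
        · exact (barNat_bar x).symm
        · intro i j
          show barW (B.mword [a] i j) = (barW (B.M a i j)).bar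
          rw [mword_single]
          exact (barW_bar _).symm
        · intro h
          exact absurd h (barNat_ne_inf x)
    | mul x y hx hy ihx ihy =>
        intro e' heq s
        cases x with
        | none => cases y <;> simp [omulO] at heq
        | some e1 =>
          cases y with
          | none => simp [omulO] at heq
          | some e2 =>
            have heq' : (if e1.q = e2.p then some (eprod e1 e2) else none) = some e' := heq
            by_cases hq : e1.q = e2.p
            · rw [if_pos hq] at heq'
              obtain rfl : eprod e1 e2 = e' := Option.some.inj heq'
              have ih1 : ∀ t, _ := fun t => ihx e1 rfl t
              have ih2 : ∀ t, _ := fun t => ihy e2 rfl t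
              by_cases hinf1 : e1.x = OSR.inf
              · obtain ⟨w2, x2, h21, h22, h23, h24⟩ := ih2 s
                set W2 : ℕ := Finset.univ.sup
                  (fun kl : Fin nB × Fin nB => (B.mword w2 kl.1 kl.2).unbotD 0) with hW2
                obtain ⟨w1, x1, h11, h12, h13, h14⟩ := ih1 (s * (W2 + 1))
                refine ⟨w1 ++ w2, x1 + x2,
                  mul_core A B hdet e1 e2 hq s w1 w2 x1 x2 h11 h12 h13 h21 h22 h23 ?_⟩
                intro i k j ho1 ho2 hb1 hb2 _
                obtain ⟨v1, hv1⟩ := wb_cases hb1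
                obtain ⟨v2, hv2⟩ := wb_cases hb2
                have hv2W : v2 ≤ W2 := by
                  have h := Finset.le_sup
                    (f := fun kl : Fin nB × Fin nB => (B.mword w2 kl.1 kl.2).unbotD 0)
                    (Finset.mem_univ (k, j))
                  simp only at h
                  rw [hv2] at h
                  exact_mod_cast h
                have h14' : s * (W2 + 1) * v1 + s * (W2 + 1) ≤ x1 := by
                  have h := h14 hinf1 i k ho1
                  rw [hv1, smul_coe_nat] at h
                  exact_mod_cast h
                rw [hv1, hv2]
                have hcast : ((v1 : ℕ) : WithBot ℕ) + ((v2 : ℕ) : WithBot ℕ)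
                    = ((v1 + v2 : ℕ) : WithBot ℕ) := by push_cast; ring
                rw [hcast, smul_coe_nat]
                have hnat : s * (v1 + v2) + s ≤ x1 + x2 := by
                  have ha : s * v2 ≤ s * W2 := Nat.mul_le_mul_left _ hv2W
                  have hb : s * v1 ≤ s * (W2 + 1) * v1 :=
                    Nat.mul_le_mul_right _ (Nat.le_mul_of_pos_right s (by omega))
                  nlinarith
                exact_mod_cast hnat
              · by_cases hinf2 : e2.x = OSR.inf
                · obtain ⟨w1, x1, h11, h12, h13, h14⟩ := ih1 s
                  set W1 : ℕ := Finset.univ.sup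
                    (fun kl : Fin nB × Fin nB => (B.mword w1 kl.1 kl.2).unbotD 0) with hW1
                  obtain ⟨w2, x2, h21, h22, h23, h24⟩ := ih2 (s * (W1 + 1))
                  refine ⟨w1 ++ w2, x1 + x2,
                    mul_core A B hdet e1 e2 hq s w1 w2 x1 x2 h11 h12 h13 h21 h22 h23 ?_⟩
                  intro i k j ho1 ho2 hb1 hb2 _
                  obtain ⟨v1, hv1⟩ := wb_cases hb1
                  obtain ⟨v2, hv2⟩ := wb_cases hb2
                  have hv1W : v1 ≤ W1 := by
                    have h := Finset.le_sup
                      (f := fun kl : Fin nB × Fin nB => (B.mword w1 kl.1 kl.2).unbotD 0)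
                      (Finset.mem_univ (i, k))
                    simp only at h
                    rw [hv1] at h
                    exact_mod_cast h
                  have h24' : s * (W1 + 1) * v2 + s * (W1 + 1) ≤ x2 := by
                    have h := h24 hinf2 k j ho2
                    rw [hv2, smul_coe_nat] at h
                    exact_mod_cast h
                  rw [hv1, hv2]
                  have hcast : ((v1 : ℕ) : WithBot ℕ) + ((v2 : ℕ) : WithBot ℕ)
                      = ((v1 + v2 : ℕ) : WithBot ℕ) := by push_cast; ring
                  rw [hcast, smul_coe_nat]
                  have hnat : s * (v1 + v2) + s ≤ x1 + x2 := by
                    have ha : s * v1 ≤ s * W1 := Nat.mul_le_mul_left _ hv1W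
                    have hb : s * v2 ≤ s * (W1 + 1) * v2 :=
                      Nat.mul_le_mul_right _ (Nat.le_mul_of_pos_right s (by omega))
                    nlinarith
                  exact_mod_cast hnat
                · obtain ⟨w1, x1, h11, h12, h13, h14⟩ := ih1 s
                  obtain ⟨w2, x2, h21, h22, h23, h24⟩ := ih2 s
                  refine ⟨w1 ++ w2, x1 + x2,
                    mul_core A B hdet e1 e2 hq s w1 w2 x1 x2 h11 h12 h13 h21 h22 h23 ?_⟩
                  intro i k j _ _ _ _ habs
                  rcases OSR.add_eq_inf habs with h | h
                  · exact absurd h hinf1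
                  · exact absurd h hinf2
            · rw [if_neg hq] at heq'
              cases heq'
    | stab e _ hpi ih =>
        intro e' heq s
        obtain rfl : estab e = e' := Option.some.inj heq
        have ih' : ∀ t, _ := fun t => ih e rfl t
        have hpq := hpi.1
        have hidem : omul (obar e.M) (obar e.M) = obar e.M := hpi.2
        rcases Nat.eq_zero_or_pos s with hs | hs
        · obtain ⟨w, xw, h1, h2, h3, _⟩ := ih' 0
          rw [← hpq] at h1
          refine ⟨w, xw, h1, ?_, ?_, ?_⟩
          · show barNat xw = (e.x.sharp).bar
            rw [OSR.bar_sharp]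
            exact h2
          · intro i j
            show barW (B.mword w i j) = (mstab e.M i j).bar
            have hh : (mstab e.M i j).bar = (e.M i j).bar :=
              congrFun (congrFun (obar_mstab e.M hidem) i) j
            rw [hh]
            exact h3 i j
          · intro _ i j _
            subst hs
            exact smul_zero_goal _ _
        · obtain ⟨w, xw, h1, h2, h3, h4⟩ := ih' s
          rw [← hpq] at h1
          have hbar' : ∀ k l, barW (B.mword w k l) = obar e.M k l := h3
          set Wt : ℕ := Finset.univ.sup
            (fun kl : Fin nB × Fin nB => (B.mword w kl.1 kl.2).unbotD 0) with hWt
          have hm1 : 1 ≤ s * (nB * nB * Wt + 1) := by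
            have := Nat.mul_le_mul hs (Nat.le_add_left 1 (nB * nB * Wt))
            simpa using this
          refine ⟨wpow w (s * (nB * nB * Wt + 1)), s * (nB * nB * Wt + 1) * xw, ?_, ?_, ?_, ?_⟩
          · exact apow hdet w e.p xw h1 _
          · show barNat (s * (nB * nB * Wt + 1) * xw) = (e.x.sharp).bar
            rw [OSR.bar_sharp, barNat_mul hm1]
            exact h2
          · intro i j
            show barW _ = (mstab e.M i j).bar
            rw [powbar B w e.M hbar' hidem _ hm1 i j]
            exact (congrFun (congrFun (obar_mstab e.M hidem) i) j).symm
          · intro hxinf i j hle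
            have hxnb : e.x ≠ OSR.bot := by
              intro hcon
              have := h2
              rw [hcon] at this
              exact barNat_ne_bot xw this
            have hxbar : e.x.bar = OSR.one := OSR.sharp_inf_bar hxinf hxnb
            have hxw : 1 ≤ xw := barNat_one_le (h2.trans hxbar)
            have hclm : 1 + s * 0 ≤ xw := by omega
            have hW : ∀ k l, B.mword w k l ≤ ((Wt : ℕ) : WithBot ℕ) := by
              intro k l
              exact le_coe_sup (fun kl : Fin nB × Fin nB => B.mword w kl.1 kl.2) (k, l)
            have hV : ∀ k l, e.M k l = OSR.zero → B.mword w k l ≤ (((0 : ℕ) : ℕ) : WithBot ℕ) := by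
              intro k l hz
              have hbw : barW (B.mword w k l) = OSR.zero := by
                rw [h3 k l, hz]
                rfl
              rw [barW_eq_zero hbw]
            have hH := stab_H hidem i j hle
            exact pump3 B e.M w xw s 0 Wt hs hidem hbar' hW i j
              (fun o => o = OSR.zero) hV hclm hH
    | flat e _ hpi ih =>
        intro e' heq s
        obtain rfl : eflat e = e' := Option.some.inj heq
        have ih' : ∀ t, _ := fun t => ih e rfl t
        have hpq := hpi.1
        have hidem : omul (obar e.M) (obar e.M) = obar e.M := hpi.2
        rcases Nat.eq_zero_or_pos s with hs | hs
        · obtain ⟨w, xw, h1, h2, h3, _⟩ := ih' 0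
          rw [← hpq] at h1
          refine ⟨w, xw, h1, h2, ?_, ?_⟩
          · intro i j
            show barW (B.mword w i j) = (mflat e.M i j).bar
            have hh : (mflat e.M i j).bar = (e.M i j).bar :=
              congrFun (congrFun (obar_mflat e.M hidem) i) j
            rw [hh]
            exact h3 i j
          · intro _ i j _
            subst hs
            exact smul_zero_goal _ _
        · obtain ⟨w, xw, h1, h2, h3, h4⟩ := ih' s
          rw [← hpq] at h1
          have hbar' : ∀ k l, barW (B.mword w k l) = obar e.M k l := h3
          set Wt : ℕ := Finset.univ.sup
            (fun kl : Fin nB × Fin nB => (B.mword w kl.1 kl.2).unbotD 0) with hWt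
          set V : ℕ := Finset.univ.sup
            (fun kl : Fin nB × Fin nB =>
              (if e.M kl.1 kl.2 ≠ OSR.inf then B.mword w kl.1 kl.2
               else (((0 : ℕ)) : WithBot ℕ)).unbotD 0) with hVdef
          have hm1 : 1 ≤ s * (nB * nB * Wt + 1) := by
            have := Nat.mul_le_mul hs (Nat.le_add_left 1 (nB * nB * Wt))
            simpa using this
          refine ⟨wpow w (s * (nB * nB * Wt + 1)), s * (nB * nB * Wt + 1) * xw, ?_, ?_, ?_, ?_⟩
          · exact apow hdet w e.p xw h1 _
          · show barNat (s * (nB * nB * Wt + 1) * xw) = e.x.bar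
            rw [barNat_mul hm1]
            exact h2
          · intro i j
            show barW _ = (mflat e.M i j).bar
            rw [powbar B w e.M hbar' hidem _ hm1 i j]
            exact (congrFun (congrFun (obar_mflat e.M hidem) i) j).symm
          · intro hxinf i j hle
            have hxinf' : e.x = OSR.inf := hxinf
            have hxbar : e.x.bar = OSR.one := by rw [hxinf']; rfl
            have hxw : 1 ≤ xw := barNat_one_le (h2.trans hxbar)
            have hW : ∀ k l, B.mword w k l ≤ ((Wt : ℕ) : WithBot ℕ) := by
              intro k l
              exact le_coe_sup (fun kl : Fin nB × Fin nB => B.mword w kl.1 kl.2) (k, l)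
            have hV : ∀ k l, e.M k l ≠ OSR.inf → B.mword w k l ≤ ((V : ℕ) : WithBot ℕ) := by
              intro k l hz
              have h := le_coe_sup (fun kl : Fin nB × Fin nB =>
                if e.M kl.1 kl.2 ≠ OSR.inf then B.mword w kl.1 kl.2
                else (((0 : ℕ)) : WithBot ℕ)) (k, l)
              simp only at h
              rw [if_pos hz] at h
              exact h
            have hclm : 1 + s * V ≤ xw := by
              by_cases hV0 : V = 0
              · rw [hV0]
                omega
              · have hne : (Finset.univ : Finset (Fin nB × Fin nB)).Nonempty :=
                  ⟨(i, j), Finset.mem_univ _⟩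
                obtain ⟨kl, -, hkl⟩ := Finset.exists_mem_eq_sup Finset.univ hne
                  (fun kl : Fin nB × Fin nB =>
                    (if e.M kl.1 kl.2 ≠ OSR.inf then B.mword w kl.1 kl.2
                     else (((0 : ℕ)) : WithBot ℕ)).unbotD 0)
                have hVeq : V = (if e.M kl.1 kl.2 ≠ OSR.inf then B.mword w kl.1 kl.2
                     else (((0 : ℕ)) : WithBot ℕ)).unbotD 0 := hkl
                by_cases hcond : e.M kl.1 kl.2 ≠ OSR.inf
                · rw [if_pos hcond] at hVeq
                  have hbne : B.mword w kl.1 kl.2 ≠ ⊥ := by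
                    intro hcon
                    rw [hcon] at hVeq
                    exact hV0 hVeq
                  obtain ⟨v, hv⟩ := wb_cases hbne
                  rw [hv, unbot'_coe] at hVeq
                  have h := h4 hxinf' kl.1 kl.2 (OSR.le_one_iff.mpr hcond)
                  rw [hv, smul_coe_nat] at h
                  have hnat : s * v + s ≤ xw := by exact_mod_cast h
                  rw [hVeq]
                  omega
                · rw [if_neg hcond] at hVeq
                  rw [unbot'_coe] at hVeq
                  exact absurd hVeq hV0
            have hH := flat_H hidem i j hle
            exact pump3 B e.M w xw s V Wt hs hidem hbar' hW i j
              (fun o => o ≠ OSR.inf) hV hclm hH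
  intro e he s
  exact key _ he e rfl s
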